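/- An analogy reasoner in the centipede game who believes the opponent drops with probability x ∈ [0,1] at every even node finds, given that role-1 outcomes always reach terminal node z_K (probability 1/2 of being P1) and role-2 matches end immediately, that the Bernoulli-path log-likelihood objective reduces to minimizing (1/2)·ln(1/((1−x)^{K/2−1}·x)) over x ∈ (0,1), whose unique minimizer is x = 2/K (for K ≥ 4 even). Moreover, under the belief that the opponent continues with probability 1 − 2/K at each future node, choosing Across at any node dominates Drop whenever (1 − 2/K)·g − (2/K)·ℓ > 0, i.e. whenever g > 2ℓ/(K−2). -/
import Mathlib

/-- the analogy reasoner's KL-minimization objective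
(1/2)·ln(1/((1−x)^{K/2−1}·x)) over x ∈ (0,1) has the unique minimizer x = 2/K, and the
subjective comparison of Across versus Drop, (1−2/K)g − (2/K)ℓ > 0, holds iff
g > 2ℓ/(K−2). -/
theorem analogy_inference_centipede (K : ℕ) (hK : 4 ≤ K) (hKeven : Even K)
    (f : ℝ → ℝ)
    (hf : ∀ x, f x = (1/2) * Real.log (1 / ((1 - x) ^ (K / 2 - 1) * x))) :
    (∀ x ∈ Set.Ioo (0:ℝ) 1, x ≠ 2 / (K : ℝ) → f (2 / (K : ℝ)) < f x) ∧
    (∀ g l : ℝ, 0 < g → 0 < l →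
      ((1 - 2 / (K : ℝ)) * g - (2 / (K : ℝ)) * l > 0 ↔ g > 2 * l / ((K : ℝ) - 2))) := by
  obtain ⟨m, hm⟩ := hKeven
  have hK2 : K = 2 * m := by omega
  have hm2 : 2 ≤ m := by omega
  have hmR : (2:ℝ) ≤ (m:ℝ) := by exact_mod_cast hm2
  have hKR : (K:ℝ) = 2 * m := by exact_mod_cast hK2
  have hmpos : (0:ℝ) < m := by linarith
  have hnR : ((K / 2 - 1 : ℕ) : ℝ) = (m:ℝ) - 1 := by
    have : K / 2 - 1 = m - 1 := by omega
    rw [this, Nat.cast_sub (by omega : 1 ≤ m), Nat.cast_one]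
  have hp : (2 / (K:ℝ)) = 1 / m := by rw [hKR]; field_simp
  constructor
  · intro x hx hxne
    obtain ⟨hx0, hx1⟩ := hx
    set p : ℝ := 2 / (K:ℝ) with hpdef
    set n : ℕ := K / 2 - 1 with hndef
    have hp0 : 0 < p := by rw [hp]; positivity
    have hp1 : p < 1 := by rw [hp, div_lt_one hmpos]; linarith
    have h1x : (0:ℝ) < 1 - x := by linarith
    have h1p : (0:ℝ) < 1 - p := by linarith
    have ha : Real.log ((1 - x) / (1 - p)) < (1 - x) / (1 - p) - 1 := by
      apply Real.log_lt_sub_one_of_pos (by positivity)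
      intro h
      apply hxne
      have := (div_eq_one_iff_eq (by linarith : (1:ℝ) - p ≠ 0)).mp h
      linarith
    have hb : Real.log (x / p) < x / p - 1 := by
      apply Real.log_lt_sub_one_of_pos (by positivity)
      intro h
      exact hxne ((div_eq_one_iff_eq (ne_of_gt hp0)).mp h)
    have hla : Real.log ((1 - x) / (1 - p)) = Real.log (1 - x) - Real.log (1 - p) :=
      Real.log_div (by linarith) (by linarith)
    have hlb : Real.log (x / p) = Real.log x - Real.log p :=
      Real.log_div (ne_of_gt hx0) (ne_of_gt hp0)
    have key : ((m:ℝ) - 1) * ((1 - x) / (1 - p) - 1) + (x / p - 1) = 0 := by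
      rw [hp]
      have hm1 : (m:ℝ) - 1 ≠ 0 := by linarith
      have h11 : (1:ℝ) - 1 / m = ((m:ℝ) - 1) / m := by field_simp
      rw [h11]
      field_simp
      try ring
    have hsum : ((m:ℝ) - 1) * Real.log ((1 - x) / (1 - p)) + Real.log (x / p) < 0 := by
      have h1 : ((m:ℝ) - 1) * Real.log ((1 - x) / (1 - p)) ≤
          ((m:ℝ) - 1) * ((1 - x) / (1 - p) - 1) :=
        mul_le_mul_of_nonneg_left (le_of_lt ha) (by linarith)
      linarith
    have hlog : Real.log ((1 - x) ^ n * x) < Real.log ((1 - p) ^ n * p) := by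
      have e1 : Real.log ((1 - x) ^ n * x) = (n:ℝ) * Real.log (1 - x) + Real.log x := by
        rw [Real.log_mul (by positivity) (ne_of_gt hx0), Real.log_pow]
        try push_cast
        try ring
      have e2 : Real.log ((1 - p) ^ n * p) = (n:ℝ) * Real.log (1 - p) + Real.log p := by
        rw [Real.log_mul (by positivity) (ne_of_gt hp0), Real.log_pow]
        try push_cast
        try ring
      rw [e1, e2, hnR]
      nlinarith [hsum, hla, hlb]
    rw [hf, hf]
    have hAx : (0:ℝ) < (1 - x) ^ n * x := by positivity
    have hAp : (0:ℝ) < (1 - p) ^ n * p := by positivity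
    have l1 : Real.log (1 / ((1 - p) ^ n * p)) = -Real.log ((1 - p) ^ n * p) := by
      rw [one_div, Real.log_inv]
    have l2 : Real.log (1 / ((1 - x) ^ n * x)) = -Real.log ((1 - x) ^ n * x) := by
      rw [one_div, Real.log_inv]
    rw [l1, l2]
    linarith
  · intro g l hg hl
    have hKm2 : (0:ℝ) < (K:ℝ) - 2 := by rw [hKR]; linarith
    have hKpos : (0:ℝ) < (K:ℝ) := by rw [hKR]; linarith
    have hiden : (1 - 2 / (K:ℝ)) * g - 2 / (K:ℝ) * l = (((K:ℝ) - 2) * g - 2 * l) / K := by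
      field_simp
      try ring
    constructor
    · intro h
      rw [gt_iff_lt, hiden, lt_div_iff₀ hKpos, zero_mul] at h
      rw [gt_iff_lt, div_lt_iff₀ hKm2]
      linarith
    · intro h
      rw [gt_iff_lt, div_lt_iff₀ hKm2] at h
      rw [gt_iff_lt, hiden, lt_div_iff₀ hKpos, zero_mul]
      linarith
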